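/- With p(n) = (2n−1)!!/(2^n · n!) and h(n) = (1 + 1/(22n))/√(π·n) as real numbers, the sequence p(n)/h(n) tends to 1 as n → ∞. Equivalently, √(π·n) · (2n−1)!!/(2^n · n!) tends to 1 as n → ∞. -/

import Mathlib

open Nat Real Filter

lemma aux_fact (n : ℕ) (hn : 1 ≤ n) : ((2*n)! : ℕ) = 2^n * n ! * (2*n-1)‼ := by
  have h : 2*n - 1 + 1 = 2*n := by omega
  have := Nat.factorial_eq_mul_doubleFactorial (2*n-1)
  rw [h] at this
  rw [this, Nat.doubleFactorial_two_mul]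

lemma aux_key (n : ℕ) (hn : 1 ≤ n) :
    Real.sqrt (Real.pi * n) * (((2 * n - 1)‼ : ℝ) / (2 ^ n * n.factorial)) =
      Real.sqrt Real.pi * Stirling.stirlingSeq (2*n) / (Stirling.stirlingSeq n)^2 := by
  have hn0 : (0:ℝ) < n := by exact_mod_cast hn
  have hdf : ((2*n-1)‼ : ℝ) = ((2*n)! : ℝ) / (2^n * n !) := by
    rw [eq_div_iff (by positivity)]
    rw_mod_cast [aux_fact n hn]
    ring
  rw [hdf, Stirling.stirlingSeq, Stirling.stirlingSeq]
  have hpi : Real.sqrt (Real.pi * n) = Real.sqrt Real.pi * Real.sqrt n := Real.sqrt_mul pi_pos.le _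
  have h4 : Real.sqrt (2*((2*n : ℕ):ℝ)) = 2 * Real.sqrt n := by
    push_cast
    rw [show 2*(2*(n:ℝ)) = (2:ℝ)^2 * n by ring, Real.sqrt_mul (by positivity),
      Real.sqrt_sq (by norm_num)]
  have h2n : Real.sqrt (2*(n:ℝ)) = Real.sqrt 2 * Real.sqrt n := Real.sqrt_mul (by norm_num) _
  have hs2 : Real.sqrt 2 ^ 2 = 2 := Real.sq_sqrt (by norm_num)
  have hsn : Real.sqrt (n:ℝ) ≠ 0 := by positivity
  have hs2' : Real.sqrt 2 ≠ 0 := by positivity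
  have he : Real.exp 1 ≠ 0 := Real.exp_ne_zero 1
  have hf : (n ! : ℝ) ≠ 0 := by positivity
  rw [hpi, h4, h2n]
  have hcast : ((2*n : ℕ):ℝ) = 2*(n:ℝ) := by push_cast; ring
  rw [hcast]
  field_simp
  rw [show (2*(n:ℝ)/Real.exp 1)^(2*n) = 2^(2*n) * ((n:ℝ)/Real.exp 1)^(2*n) by rw [mul_div_assoc, mul_pow]]
  ring_nf
  rw [hs2]
  ring_nf

theorem stmt_12 :
    Filter.Tendsto
      (fun n : ℕ =>
        (((2 * n - 1)‼ : ℝ) / (2 ^ n * n.factorial))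
          / ((1 + 1 / (22 * (n : ℝ))) / Real.sqrt (Real.pi * n)))
      Filter.atTop (nhds 1) ∧
    Filter.Tendsto
      (fun n : ℕ =>
        Real.sqrt (Real.pi * n) * (((2 * n - 1)‼ : ℝ) / (2 ^ n * n.factorial)))
      Filter.atTop (nhds 1) := by
  have hpi : Real.sqrt Real.pi ≠ 0 := ne_of_gt (Real.sqrt_pos.mpr Real.pi_pos)
  have h1 := Stirling.tendsto_stirlingSeq_sqrt_pi
  have h2 : Tendsto (fun n : ℕ => Stirling.stirlingSeq (2*n)) atTop (nhds (Real.sqrt Real.pi)) :=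
    h1.comp (tendsto_id.const_mul_atTop' two_pos)
  have h3 : Tendsto (fun n : ℕ => Real.sqrt Real.pi * Stirling.stirlingSeq (2*n)
      / (Stirling.stirlingSeq n)^2) atTop
      (nhds (Real.sqrt Real.pi * Real.sqrt Real.pi / (Real.sqrt Real.pi)^2)) :=
    (Tendsto.const_mul _ h2).div (h1.pow 2) (pow_ne_zero 2 hpi)
  have hone : Real.sqrt Real.pi * Real.sqrt Real.pi / (Real.sqrt Real.pi)^2 = 1 := by
    rw [sq]; field_simp
  rw [hone] at h3
  have main : Filter.Tendsto
      (fun n : ℕ =>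
        Real.sqrt (Real.pi * n) * (((2 * n - 1)‼ : ℝ) / (2 ^ n * n.factorial)))
      Filter.atTop (nhds 1) := by
    apply h3.congr' (Filter.eventually_atTop.mpr ⟨1, fun n hn => (aux_key n hn).symm⟩)
  refine ⟨?_, main⟩
  have hden : Tendsto (fun n : ℕ => 1 + 1 / (22 * (n:ℝ))) atTop (nhds 1) := by
    have : Tendsto (fun n : ℕ => 1 / (22 * (n:ℝ))) atTop (nhds 0) := by
      have := tendsto_one_div_atTop_nhds_zero_nat.const_mul (22:ℝ)⁻¹
      rw [mul_zero] at this
      apply this.congr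
      intro n
      rw [one_div, one_div, mul_inv]
    have := this.const_add (1:ℝ)
    simpa using this
  have := main.div hden one_ne_zero
  rw [div_one] at this
  apply this.congr
  intro n
  simp only [Pi.div_apply]
  rw [div_div_eq_mul_div, mul_comm]
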